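/- Let I be a finite index set and σ_i, τ_i (i ∈ I), σ, τ be types in 𝕋. If ⋂_{i∈I}(σ_i→τ_i) ≤ σ→τ, then there exists a subset J ⊆ I such that σ ≤ ⋂_{j∈J}σ_j and ⋂_{j∈J}τ_j ≤ τ (empty intersections being taken to be ω). -/

import Mathlib

/-- Intersection and record types `𝕋`. Record types are the types satisfying `IsRec`. -/
inductive Ty where
  | const : Nat → Ty
  | omega : Ty
  | arrow : Ty → Ty → Ty
  | inter : Ty → Ty → Ty
  | empty : Ty
  | fld : Nat → Ty → Ty
  | merge : Ty → Ty → Ty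
deriving DecidableEq

/-- The record types `𝕋_R ⊆ 𝕋`. -/
inductive IsRec : Ty → Prop where
  | empty : IsRec .empty
  | fld (l : Nat) (σ : Ty) : IsRec (.fld l σ)
  | merge {ρ₁ ρ₂ : Ty} : IsRec ρ₁ → IsRec ρ₂ → IsRec (.merge ρ₁ ρ₂)
  | inter {ρ₁ ρ₂ : Ty} : IsRec ρ₁ → IsRec ρ₂ → IsRec (.inter ρ₁ ρ₂)

/-- Subtyping on `𝕋`: the least preorder satisfying the BCD axioms together with
the record and record-merge axioms. -/
inductive TySub : Ty → Ty → Prop where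
  | refl (σ : Ty) : TySub σ σ
  | trans {σ τ υ : Ty} : TySub σ τ → TySub τ υ → TySub σ υ
  | le_omega (σ : Ty) : TySub σ .omega
  | omega_arrow : TySub .omega (.arrow .omega .omega)
  | inter_left (σ τ : Ty) : TySub (.inter σ τ) σ
  | inter_right (σ τ : Ty) : TySub (.inter σ τ) τ
  | le_inter {σ τ₁ τ₂ : Ty} : TySub σ τ₁ → TySub σ τ₂ → TySub σ (.inter τ₁ τ₂)
  | arrow_inter (σ τ₁ τ₂ : Ty) :
      TySub (.inter (.arrow σ τ₁) (.arrow σ τ₂)) (.arrow σ (.inter τ₁ τ₂))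
  | arrow_mono {σ₁ σ₂ τ₁ τ₂ : Ty} : TySub σ₂ σ₁ → TySub τ₁ τ₂ →
      TySub (.arrow σ₁ τ₁) (.arrow σ₂ τ₂)
  | fld_empty (l : Nat) (σ : Ty) : TySub (.fld l σ) .empty
  | fld_inter (l : Nat) (σ τ : Ty) :
      TySub (.inter (.fld l σ) (.fld l τ)) (.fld l (.inter σ τ))
  | fld_mono {σ τ : Ty} (l : Nat) : TySub σ τ → TySub (.fld l σ) (.fld l τ)
  | merge_empty_r {ρ : Ty} : IsRec ρ → TySub (.merge ρ .empty) ρ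
  | merge_empty_r' {ρ : Ty} : IsRec ρ → TySub ρ (.merge ρ .empty)
  | merge_empty_l {ρ : Ty} : IsRec ρ → TySub (.merge .empty ρ) ρ
  | merge_empty_l' {ρ : Ty} : IsRec ρ → TySub ρ (.merge .empty ρ)
  | merge_assoc {ρ₁ ρ₂ ρ₃ : Ty} : IsRec ρ₁ → IsRec ρ₂ → IsRec ρ₃ →
      TySub (.merge (.merge ρ₁ ρ₂) ρ₃) (.merge ρ₁ (.merge ρ₂ ρ₃))
  | merge_assoc' {ρ₁ ρ₂ ρ₃ : Ty} : IsRec ρ₁ → IsRec ρ₂ → IsRec ρ₃ →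
      TySub (.merge ρ₁ (.merge ρ₂ ρ₃)) (.merge (.merge ρ₁ ρ₂) ρ₃)
  | merge_inter {ρ₁ ρ₂ ρ₃ : Ty} : IsRec ρ₁ → IsRec ρ₂ → IsRec ρ₃ →
      TySub (.merge (.inter ρ₁ ρ₂) ρ₃) (.inter (.merge ρ₁ ρ₃) (.merge ρ₂ ρ₃))
  | merge_inter' {ρ₁ ρ₂ ρ₃ : Ty} : IsRec ρ₁ → IsRec ρ₂ → IsRec ρ₃ →
      TySub (.inter (.merge ρ₁ ρ₃) (.merge ρ₂ ρ₃)) (.merge (.inter ρ₁ ρ₂) ρ₃)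
  | fld_absorb {ρ : Ty} (l : Nat) (σ τ : Ty) : IsRec ρ →
      TySub (.merge (.fld l σ) (.inter (.fld l τ) ρ)) (.inter (.fld l τ) ρ)
  | fld_absorb' {ρ : Ty} (l : Nat) (σ τ : Ty) : IsRec ρ →
      TySub (.inter (.fld l τ) ρ) (.merge (.fld l σ) (.inter (.fld l τ) ρ))
  | fld_comm {ρ : Ty} {l l' : Nat} (σ τ : Ty) : l ≠ l' → IsRec ρ →
      TySub (.merge (.fld l σ) (.inter (.fld l' τ) ρ))
          (.inter (.fld l' τ) (.merge (.fld l σ) ρ))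
  | fld_comm' {ρ : Ty} {l l' : Nat} (σ τ : Ty) : l ≠ l' → IsRec ρ →
      TySub (.inter (.fld l' τ) (.merge (.fld l σ) ρ))
          (.merge (.fld l σ) (.inter (.fld l' τ) ρ))
  | merge_mono_l {ρ₁ ρ₂ ρ : Ty} : IsRec ρ₁ → IsRec ρ₂ → IsRec ρ →
      TySub ρ₁ ρ₂ → TySub (.merge ρ₁ ρ) (.merge ρ₂ ρ)
  | merge_congr_r {ρ ρ₁ ρ₂ : Ty} : IsRec ρ → IsRec ρ₁ → IsRec ρ₂ →
      TySub ρ₁ ρ₂ → TySub ρ₂ ρ₁ → TySub (.merge ρ ρ₁) (.merge ρ ρ₂)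

/-- Type equality: mutual subtyping. -/
def TyEq (σ τ : Ty) : Prop := TySub σ τ ∧ TySub τ σ

/-- Finite intersection of a list of types (`ω` for the empty list). -/
def interList : List Ty → Ty
  | [] => .omega
  | [σ] => σ
  | σ :: τ :: rest => .inter σ (interList (τ :: rest))


/-- Top-level intersection components of a type. -/
def conjuncts : Ty → List Ty
  | .inter a b => conjuncts a ++ conjuncts b
  | t => [t]

theorem interList_le_mem : ∀ {L : List Ty} {x : Ty}, x ∈ L → TySub (interList L) x := by
  intro L
  induction L with
  | nil => intro x h; cases h
  | cons a rest ih =>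
    intro x h
    cases rest with
    | nil =>
      rcases List.mem_singleton.mp h with rfl
      exact .refl _
    | cons b r =>
      rcases List.mem_cons.mp h with rfl | h'
      · exact .inter_left _ _
      · exact .trans (.inter_right _ _) (ih h')

theorem le_interList : ∀ {L : List Ty} {s : Ty}, (∀ x ∈ L, TySub s x) → TySub s (interList L) := by
  intro L
  induction L with
  | nil => intro s _; exact .le_omega s
  | cons a rest ih =>
    intro s h
    cases rest with
    | nil => exact h a (List.mem_singleton.mpr rfl)
    | cons b r =>
      exact .le_inter (h a (List.mem_cons_self))
        (ih fun x hx => h x (List.mem_cons_of_mem _ hx))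

theorem interList_le_of_subset {L₁ L₂ : List Ty} (h : ∀ x ∈ L₁, x ∈ L₂) :
    TySub (interList L₂) (interList L₁) :=
  le_interList fun x hx => interList_le_mem (h x hx)

/-- The key invariant on subtyping derivations. -/
def Good (A B : Ty) : Prop :=
  ∀ a b, Ty.arrow a b ∈ conjuncts B →
    ∃ J : List (Ty × Ty), (∀ p ∈ J, Ty.arrow p.1 p.2 ∈ conjuncts A) ∧
      TySub a (interList (J.map Prod.fst)) ∧ TySub (interList (J.map Prod.snd)) b

theorem good_of_subset {A B : Ty} (h : ∀ x ∈ conjuncts B, x ∈ conjuncts A) : Good A B := by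
  intro a b hab
  refine ⟨[(a, b)], ?_, .refl a, .refl b⟩
  intro p hp
  rcases List.mem_singleton.mp hp with rfl
  exact h _ hab

theorem good_of_no_arrow {A B : Ty} (h : ∀ a b, Ty.arrow a b ∉ conjuncts B) : Good A B :=
  fun a b hab => absurd hab (h a b)

theorem isRec_no_arrow {ρ : Ty} (h : IsRec ρ) : ∀ a b, Ty.arrow a b ∉ conjuncts ρ := by
  induction h with
  | empty => intro a b hab; simp [conjuncts] at hab
  | fld l s => intro a b hab; simp [conjuncts] at hab
  | merge h1 h2 ih1 ih2 => intro a b hab; simp [conjuncts] at hab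
  | inter h1 h2 ih1 ih2 =>
    intro a b hab
    rcases List.mem_append.mp hab with h' | h'
    · exact ih1 a b h'
    · exact ih2 a b h'

theorem trans_aux {A : Ty} : ∀ (J : List (Ty × Ty)),
    (∀ p ∈ J, ∃ K : List (Ty × Ty), (∀ q ∈ K, Ty.arrow q.1 q.2 ∈ conjuncts A) ∧
      TySub p.1 (interList (K.map Prod.fst)) ∧ TySub (interList (K.map Prod.snd)) p.2) →
    ∃ K : List (Ty × Ty), (∀ q ∈ K, Ty.arrow q.1 q.2 ∈ conjuncts A) ∧
      (∀ q ∈ K, ∃ p ∈ J, TySub p.1 q.1) ∧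
      (∀ p ∈ J, TySub (interList (K.map Prod.snd)) p.2) := by
  intro J
  induction J with
  | nil => intro _; exact ⟨[], by simp, by simp, by simp⟩
  | cons hd tl ih =>
    intro h
    obtain ⟨K₀, hK₀mem, hK₀1, hK₀2⟩ := h hd (List.mem_cons_self)
    obtain ⟨K₁, hK₁mem, hK₁1, hK₁2⟩ := ih fun p hp => h p (List.mem_cons_of_mem _ hp)
    refine ⟨K₀ ++ K₁, ?_, ?_, ?_⟩
    · intro q hq
      rcases List.mem_append.mp hq with h' | h'
      · exact hK₀mem q h'
      · exact hK₁mem q h'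
    · intro q hq
      rcases List.mem_append.mp hq with h' | h'
      · exact ⟨hd, List.mem_cons_self,
          .trans hK₀1 (interList_le_mem (List.mem_map_of_mem (f := Prod.fst) h'))⟩
      · obtain ⟨p, hp, hpq⟩ := hK₁1 q h'
        exact ⟨p, List.mem_cons_of_mem _ hp, hpq⟩
    · intro p hp
      have hmap : (K₀ ++ K₁).map Prod.snd = K₀.map Prod.snd ++ K₁.map Prod.snd :=
        List.map_append
      rcases List.mem_cons.mp hp with rfl | hp'
      · refine .trans ?_ hK₀2
        rw [hmap]
        exact interList_le_of_subset fun x hx => List.mem_append_left _ hx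
      · refine .trans ?_ (hK₁2 p hp')
        rw [hmap]
        exact interList_le_of_subset fun x hx => List.mem_append_right _ hx

theorem good_of_sub {A B : Ty} (h : TySub A B) : Good A B := by
  induction h with
  | refl σ => exact good_of_subset fun x hx => hx
  | trans h1 h2 ih1 ih2 =>
    intro a b hab
    obtain ⟨J, hJmem, hJ1, hJ2⟩ := ih2 a b hab
    obtain ⟨K, hKmem, hK1, hK2⟩ := trans_aux J fun p hp => ih1 p.1 p.2 (hJmem p hp)
    refine ⟨K, hKmem, ?_, ?_⟩
    · refine le_interList fun x hx => ?_
      obtain ⟨q, hq, rfl⟩ := List.mem_map.mp hx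
      obtain ⟨p, hp, hpq⟩ := hK1 q hq
      exact .trans (.trans hJ1 (interList_le_mem (List.mem_map_of_mem (f := Prod.fst) hp))) hpq
    · refine .trans (le_interList fun x hx => ?_) hJ2
      obtain ⟨p, hp, rfl⟩ := List.mem_map.mp hx
      exact hK2 p hp
  | le_omega σ => exact good_of_no_arrow (by intro a b hab; simp [conjuncts] at hab)
  | omega_arrow =>
    intro a b hab
    simp [conjuncts] at hab
    obtain ⟨rfl, rfl⟩ := hab
    exact ⟨[], by simp, .le_omega _, .refl _⟩
  | inter_left σ τ =>
    exact good_of_subset fun x hx => by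
      show x ∈ conjuncts (.inter σ τ)
      simp [conjuncts]; exact Or.inl hx
  | inter_right σ τ =>
    exact good_of_subset fun x hx => by
      show x ∈ conjuncts (.inter σ τ)
      simp [conjuncts]; exact Or.inr hx
  | le_inter h1 h2 ih1 ih2 =>
    intro a b hab
    rcases List.mem_append.mp hab with h' | h'
    · exact ih1 a b h'
    · exact ih2 a b h'
  | arrow_inter s t1 t2 =>
    intro a b hab
    obtain ⟨ha, hb⟩ := Ty.arrow.inj (List.mem_singleton.mp hab)
    refine ⟨[(s, t1), (s, t2)], by simp [conjuncts], ?_, ?_⟩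
    · rw [ha]; exact .le_inter (.refl s) (.refl s)
    · rw [hb]; exact .refl _
  | @arrow_mono σ₁ σ₂ τ₁ τ₂ h1 h2 ih1 ih2 =>
    intro a b hab
    simp [conjuncts] at hab
    obtain ⟨rfl, rfl⟩ := hab
    exact ⟨[(σ₁, τ₁)], by simp [conjuncts], h1, h2⟩
  | fld_empty l σ => exact good_of_no_arrow (by intro a b hab; simp [conjuncts] at hab)
  | fld_inter l σ τ => exact good_of_no_arrow (by intro a b hab; simp [conjuncts] at hab)
  | fld_mono l h ih => exact good_of_no_arrow (by intro a b hab; simp [conjuncts] at hab)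
  | merge_empty_r hρ => exact good_of_no_arrow (isRec_no_arrow hρ)
  | merge_empty_r' hρ => exact good_of_no_arrow (isRec_no_arrow (.merge hρ .empty))
  | merge_empty_l hρ => exact good_of_no_arrow (isRec_no_arrow hρ)
  | merge_empty_l' hρ => exact good_of_no_arrow (isRec_no_arrow (.merge .empty hρ))
  | merge_assoc h1 h2 h3 =>
    exact good_of_no_arrow (isRec_no_arrow (.merge h1 (.merge h2 h3)))
  | merge_assoc' h1 h2 h3 =>
    exact good_of_no_arrow (isRec_no_arrow (.merge (.merge h1 h2) h3))
  | merge_inter h1 h2 h3 =>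
    exact good_of_no_arrow (isRec_no_arrow (.inter (.merge h1 h3) (.merge h2 h3)))
  | merge_inter' h1 h2 h3 =>
    exact good_of_no_arrow (isRec_no_arrow (.merge (.inter h1 h2) h3))
  | fld_absorb l σ τ hρ =>
    exact good_of_no_arrow (isRec_no_arrow (.inter (.fld _ _) hρ))
  | fld_absorb' l σ τ hρ =>
    exact good_of_no_arrow (isRec_no_arrow (.merge (.fld _ _) (.inter (.fld _ _) hρ)))
  | fld_comm σ τ hne hρ =>
    exact good_of_no_arrow (isRec_no_arrow (.inter (.fld _ _) (.merge (.fld _ _) hρ)))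
  | fld_comm' σ τ hne hρ =>
    exact good_of_no_arrow (isRec_no_arrow (.merge (.fld _ _) (.inter (.fld _ _) hρ)))
  | merge_mono_l h1 h2 h3 hsub ih =>
    exact good_of_no_arrow (isRec_no_arrow (.merge h2 h3))
  | merge_congr_r h1 h2 h3 hs1 hs2 ih1 ih2 =>
    exact good_of_no_arrow (isRec_no_arrow (.merge h1 h3))

theorem mem_of_arrow_conj : ∀ (l : List (Ty × Ty)) (a b : Ty),
    Ty.arrow a b ∈ conjuncts (interList (l.map fun p => .arrow p.1 p.2)) → (a, b) ∈ l := by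
  intro l
  induction l with
  | nil => intro a b h; simp [interList, conjuncts] at h
  | cons p tl ih =>
    intro a b h
    cases tl with
    | nil =>
      simp [interList, conjuncts] at h
      obtain ⟨rfl, rfl⟩ := h
      simp
    | cons q r =>
      simp only [List.map_cons] at h
      rcases List.mem_append.mp h with h' | h'
      · simp [conjuncts] at h'
        obtain ⟨rfl, rfl⟩ := h'
        simp
      · exact List.mem_cons_of_mem _ (ih a b (by simpa using h'))

/-- If `⋂_{i∈I}(σ_i→τ_i) ≤ σ→τ` then for some subfamily `J ⊆ I` we have
`σ ≤ ⋂_{j∈J}σ_j` and `⋂_{j∈J}τ_j ≤ τ`. The finite family is given as a list of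
pairs, and the subfamily as a sublist. -/
theorem arrows_inter_le_arrow (l : List (Ty × Ty)) (σ τ : Ty)
    (h : TySub (interList (l.map fun p => .arrow p.1 p.2)) (.arrow σ τ)) :
    ∃ l' : List (Ty × Ty), l'.Sublist l ∧
      TySub σ (interList (l'.map Prod.fst)) ∧
      TySub (interList (l'.map Prod.snd)) τ := by
  obtain ⟨J, hJmem, hJ1, hJ2⟩ :=
    good_of_sub h σ τ (by simp [conjuncts])
  refine ⟨l.filter (fun p => p ∈ J), List.filter_sublist, ?_, ?_⟩
  · refine le_interList fun x hx => ?_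
    obtain ⟨p, hp, rfl⟩ := List.mem_map.mp hx
    have hpJ : p ∈ J := by
      have := List.of_mem_filter hp
      simpa using this
    exact .trans hJ1 (interList_le_mem (List.mem_map_of_mem (f := Prod.fst) hpJ))
  · refine .trans (interList_le_of_subset fun x hx => ?_) hJ2
    obtain ⟨p, hp, rfl⟩ := List.mem_map.mp hx
    have hpl : p ∈ l := mem_of_arrow_conj l p.1 p.2 (hJmem p hp)
    exact List.mem_map_of_mem (f := Prod.snd) (List.mem_filter.mpr ⟨hpl, by simpa using hp⟩)
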